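/- If X is finitely representable in Y, then l₂(X) is finitely representable in l₂(Y). -/
import Mathlib

open Filter Finset
open scoped ENNReal

noncomputable section

namespace L2FR

variable {X : Type*} [NormedAddCommGroup X] [NormedSpace ℝ X]

/-- Evaluation at a coordinate as a linear map. -/
def evalLM (i : ℕ) : lp (fun _ : ℕ => X) 2 →ₗ[ℝ] X where
  toFun f := f i
  map_add' _ _ := rfl
  map_smul' _ _ := rfl

@[simp] lemma evalLM_apply (i : ℕ) (f : lp (fun _ : ℕ => X) 2) : evalLM i f = f i := rfl

omit [NormedSpace ℝ X] in
lemma single_add (i : ℕ) (a b : X) :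
    lp.single (E := fun _ : ℕ => X) 2 i (a + b) =
      lp.single 2 i a + lp.single 2 i b := by
  apply lp.ext
  funext j
  rw [lp.coeFn_add]
  by_cases hj : j = i
  · subst hj; simp [lp.single_apply_self]
  · simp [lp.single_apply_ne _ _ _ hj]

/-- Truncation to the first `n` coordinates, as a linear map. -/
def truncLM (n : ℕ) : lp (fun _ : ℕ => X) 2 →ₗ[ℝ] lp (fun _ : ℕ => X) 2 where
  toFun f := ∑ i ∈ Finset.range n, lp.single 2 i (f i)
  map_add' f g := by
    rw [← Finset.sum_add_distrib]
    refine Finset.sum_congr rfl fun i _ => ?_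
    rw [lp.coeFn_add, Pi.add_apply, single_add]
  map_smul' c f := by
    simp only [RingHom.id_apply]
    rw [Finset.smul_sum]
    refine Finset.sum_congr rfl fun i _ => ?_
    rw [lp.coeFn_smul, Pi.smul_apply, lp.single_smul]

omit [NormedSpace ℝ X] in
lemma norm_sum_single_sq (f : ℕ → X) (n : ℕ) :
    ‖∑ i ∈ Finset.range n, lp.single (E := fun _ : ℕ => X) 2 i (f i)‖ ^ 2 =
      ∑ i ∈ Finset.range n, ‖f i‖ ^ 2 := by
  have h := lp.norm_sum_single (p := 2) (E := fun _ : ℕ => X) (by norm_num) f (Finset.range n)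
  rw [show ((2 : ℝ≥0∞)).toReal = ((2 : ℕ) : ℝ) by norm_num] at h
  simp only [Real.rpow_natCast] at h
  exact h

lemma norm_truncLM_sq (n : ℕ) (f : lp (fun _ : ℕ => X) 2) :
    ‖truncLM n f‖ ^ 2 = ∑ i ∈ Finset.range n, ‖f i‖ ^ 2 :=
  norm_sum_single_sq (fun i => f i) n

end L2FR

end

/-- `X` is finitely representable in `Y`. -/
def FinRep (X Y : Type*) [NormedAddCommGroup X] [NormedSpace ℝ X]
    [NormedAddCommGroup Y] [NormedSpace ℝ Y] : Prop :=
  ∀ ε : ℝ, 0 < ε → ∀ A : Submodule ℝ X, FiniteDimensional ℝ A →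
    ∃ B : Submodule ℝ Y, ∃ u : A ≃L[ℝ] B,
      ‖(u : A →L[ℝ] B)‖ * ‖(u.symm : B →L[ℝ] A)‖ ≤ 1 + ε

open Filter Topology Finset
open scoped ENNReal

set_option maxHeartbeats 2000000 in
set_option synthInstance.maxHeartbeats 1000000 in
/-- If `X` is finitely representable in `Y`, then `l₂(X)` is finitely
representable in `l₂(Y)`. -/
theorem l2_sum_mono_finRep (X Y : Type*)
    [NormedAddCommGroup X] [NormedSpace ℝ X] [CompleteSpace X]
    [NormedAddCommGroup Y] [NormedSpace ℝ Y] [CompleteSpace Y]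
    (h : FinRep X Y) :
    FinRep (lp (fun _ : ℕ => X) 2) (lp (fun _ : ℕ => Y) 2) := by
  classical
  intro ε hε A hA
  -- a small parameter
  set η : ℝ := min ε 1 / 8 with hη_def
  have hη : 0 < η := by
    have : (0:ℝ) < min ε 1 := lt_min hε one_pos
    positivity
  have hη8 : η ≤ 1 / 8 := by
    have : min ε 1 ≤ 1 := min_le_right _ _
    rw [hη_def]; linarith
  have hηε : η ≤ ε / 8 := by
    have : min ε 1 ≤ ε := min_le_left _ _
    rw [hη_def]; linarith
  have hη1 : η < 1 := by linarith
  -- the coordinate images of A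
  set e : ℕ → (↥A →ₗ[ℝ] X) := fun i => (L2FR.evalLM i).comp A.subtype with he_def
  set Ai : ℕ → Submodule ℝ X := fun i => LinearMap.range (e i) with hAi_def
  have hch : ∀ i : ℕ, ∃ B : Submodule ℝ Y, ∃ u : ↥(Ai i) ≃L[ℝ] ↥B,
      ‖(u : ↥(Ai i) →L[ℝ] ↥B)‖ * ‖(u.symm : ↥B →L[ℝ] ↥(Ai i))‖ ≤ 1 + η :=
    fun i => h η hη (Ai i) inferInstance
  choose Bi vi hvi using hch
  set aN : ℕ → ℝ := fun i => ‖(vi i : ↥(Ai i) →L[ℝ] ↥(Bi i))‖ with haN_def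
  set bN : ℕ → ℝ := fun i => ‖((vi i).symm : ↥(Bi i) →L[ℝ] ↥(Ai i))‖ with hbN_def
  set c : ℕ → ℝ := fun i => if aN i = 0 then 1 else aN i with hc_def
  have hc_pos : ∀ i, 0 < c i := by
    intro i
    by_cases h0 : aN i = 0
    · simp [hc_def, h0]
    · simp only [hc_def, if_neg h0]
      exact lt_of_le_of_ne (by simp only [haN_def]; exact ContinuousLinearMap.opNorm_nonneg _) (Ne.symm h0)
  -- the normalized coordinate embeddings
  set ψ : ∀ i : ℕ, ↥(Ai i) →ₗ[ℝ] Y := fun i =>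
    (c i)⁻¹ • ((Bi i).subtype ∘ₗ ((vi i : ↥(Ai i) →L[ℝ] ↥(Bi i)) : ↥(Ai i) →ₗ[ℝ] ↥(Bi i)))
    with hψ_def
  have hψ_apply : ∀ (i : ℕ) (z : ↥(Ai i)), ψ i z = (c i)⁻¹ • ((vi i z : Y)) := by
    intro i z; simp [hψ_def]
  have hψ_norm : ∀ (i : ℕ) (z : ↥(Ai i)), ‖ψ i z‖ = (c i)⁻¹ * ‖vi i z‖ := by
    intro i z
    rw [hψ_apply i z, norm_smul, Real.norm_eq_abs,
      abs_of_pos (inv_pos.mpr (hc_pos i))]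
    rfl
  have hvi_le : ∀ (i : ℕ) (z : ↥(Ai i)), ‖vi i z‖ ≤ aN i * ‖z‖ := by
    intro i z
    simpa using (vi i : ↥(Ai i) →L[ℝ] ↥(Bi i)).le_opNorm z
  have hz_le : ∀ (i : ℕ) (z : ↥(Ai i)), ‖z‖ ≤ bN i * ‖vi i z‖ := by
    intro i z
    have := ((vi i).symm : ↥(Bi i) →L[ℝ] ↥(Ai i)).le_opNorm (vi i z)
    simpa using this
  have hψ1 : ∀ (i : ℕ) (z : ↥(Ai i)), ‖ψ i z‖ ≤ ‖z‖ := by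
    intro i z
    rw [hψ_norm]
    by_cases h0 : aN i = 0
    · have h1 : ‖vi i z‖ ≤ 0 := by simpa [h0] using hvi_le i z
      have h2 : ‖vi i z‖ = 0 := le_antisymm h1 (norm_nonneg _)
      rw [h2, mul_zero]; exact norm_nonneg _
    · have hc : c i = aN i := by simp [hc_def, h0]
      have h1 := hvi_le i z
      have h2 : (0:ℝ) < aN i := lt_of_le_of_ne (by simp only [haN_def]; exact ContinuousLinearMap.opNorm_nonneg _) (Ne.symm h0)
      rw [hc]
      calc (aN i)⁻¹ * ‖vi i z‖ ≤ (aN i)⁻¹ * (aN i * ‖z‖) := by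
            apply mul_le_mul_of_nonneg_left h1 (le_of_lt (inv_pos.mpr h2))
        _ = ‖z‖ := by field_simp
  have hψ2 : ∀ (i : ℕ) (z : ↥(Ai i)), ‖z‖ ≤ (1 + η) * ‖ψ i z‖ := by
    intro i z
    by_cases h0 : aN i = 0
    · have h1 : ‖vi i z‖ ≤ 0 := by simpa [h0] using hvi_le i z
      have h2 : ‖z‖ ≤ 0 := by
        have := hz_le i z
        nlinarith [norm_nonneg (vi i z), norm_nonneg ((vi i).symm : ↥(Bi i) →L[ℝ] ↥(Ai i))]
      have : (0:ℝ) ≤ (1 + η) * ‖ψ i z‖ := by positivity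
      linarith
    · have hc : c i = aN i := by simp [hc_def, h0]
      have h2 : (0:ℝ) < aN i := lt_of_le_of_ne (by simp only [haN_def]; exact ContinuousLinearMap.opNorm_nonneg _) (Ne.symm h0)
      have hvz : ‖vi i z‖ = aN i * ‖ψ i z‖ := by
        rw [hψ_norm, hc]; field_simp
      have h3 := hz_le i z
      rw [hvz] at h3
      have h4 : bN i * (aN i * ‖ψ i z‖) = (aN i * bN i) * ‖ψ i z‖ := by ring
      rw [h4] at h3
      have h5 : (aN i * bN i) * ‖ψ i z‖ ≤ (1 + η) * ‖ψ i z‖ :=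
        mul_le_mul_of_nonneg_right (hvi i) (norm_nonneg _)
      linarith
    -- membership of coordinates
  have hmem : ∀ (a : ↥A) (i : ℕ), ((a : lp (fun _ : ℕ => X) 2) i) ∈ Ai i :=
    fun a i => ⟨a, rfl⟩
  set g : ↥A → ℕ → Y := fun a i => ψ i ⟨(a : lp (fun _ : ℕ => X) 2) i, hmem a i⟩ with hg_def
  have hg_add : ∀ (a b : ↥A) (i : ℕ), g (a + b) i = g a i + g b i := by
    intro a b i
    have hx : (⟨((a + b : ↥A) : lp (fun _ : ℕ => X) 2) i, hmem (a + b) i⟩ : ↥(Ai i)) =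
        ⟨(a : lp (fun _ : ℕ => X) 2) i, hmem a i⟩ + ⟨(b : lp (fun _ : ℕ => X) 2) i, hmem b i⟩ := by
      apply Subtype.ext
      simp [lp.coeFn_add]
    simp only [hg_def, hx, map_add]
  have hg_smul : ∀ (t : ℝ) (a : ↥A) (i : ℕ), g (t • a) i = t • g a i := by
    intro t a i
    have hx : (⟨((t • a : ↥A) : lp (fun _ : ℕ => X) 2) i, hmem (t • a) i⟩ : ↥(Ai i)) =
        t • ⟨(a : lp (fun _ : ℕ => X) 2) i, hmem a i⟩ := by
      apply Subtype.ext
      simp [lp.coeFn_smul]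
    simp only [hg_def, hx, map_smul]
  -- a basis of A and the coordinate functionals
  set b := Module.finBasis ℝ ↥A with hb_def
  set coordL : Fin (Module.finrank ℝ ↥A) → (↥A →L[ℝ] ℝ) :=
    fun j => LinearMap.toContinuousLinearMap (b.coord j) with hcoordL_def
  set K : ℝ := ∑ j, ‖coordL j‖ with hK_def
  have hK0 : 0 ≤ K := Finset.sum_nonneg fun j _ => ContinuousLinearMap.opNorm_nonneg _
  set δ : ℝ := η / (K + 1) with hδ_def
  have hδ : 0 < δ := by positivity
  -- choose n such that truncation moves basis vectors by less than δ
  have hev : ∀ j, ∀ᶠ n in atTop,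
      ‖L2FR.truncLM n ((b j : ↥A) : lp (fun _ : ℕ => X) 2) -
        ((b j : ↥A) : lp (fun _ : ℕ => X) 2)‖ < δ := by
    intro j
    have h1 : Tendsto (fun n => ∑ i ∈ Finset.range n,
        lp.single 2 i (((b j : ↥A) : lp (fun _ : ℕ => X) 2) i)) atTop
        (𝓝 ((b j : ↥A) : lp (fun _ : ℕ => X) 2)) :=
      (lp.hasSum_single (by norm_num) _).tendsto_sum_nat
    rw [Metric.tendsto_atTop] at h1
    obtain ⟨N, hN⟩ := h1 δ hδ
    refine eventually_atTop.2 ⟨N, fun n hn => ?_⟩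
    have h2 := hN n hn
    rw [dist_eq_norm] at h2
    exact h2
  obtain ⟨n, hn⟩ := (eventually_all.2 hev).exists
  -- the perturbation estimate
  have hpert : ∀ a : ↥A,
      ‖L2FR.truncLM n (a : lp (fun _ : ℕ => X) 2) - (a : lp (fun _ : ℕ => X) 2)‖ ≤ η * ‖a‖ := by
    set D : ↥A →ₗ[ℝ] lp (fun _ : ℕ => X) 2 :=
      ((L2FR.truncLM n).comp A.subtype) - A.subtype with hD_def
    have hDa : ∀ a : ↥A,
        D a = L2FR.truncLM n (a : lp (fun _ : ℕ => X) 2) - (a : lp (fun _ : ℕ => X) 2) := by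
      intro a; simp [hD_def]
    have hDb : ∀ j, ‖D (b j)‖ ≤ δ := by
      intro j
      rw [hDa]
      exact le_of_lt (hn j)
    intro a
    rw [← hDa]
    have ha : D a = ∑ j, b.repr a j • D (b j) := by
      conv_lhs => rw [← b.sum_repr a]
      rw [map_sum]
      simp only [map_smul]
    have h1 : ‖D a‖ ≤ ∑ j, |b.repr a j| * ‖D (b j)‖ := by
      rw [ha]
      refine (norm_sum_le _ _).trans (le_of_eq ?_)
      refine Finset.sum_congr rfl fun j _ => ?_
      rw [norm_smul, Real.norm_eq_abs]
    have h2 : ∀ j, |b.repr a j| ≤ ‖coordL j‖ * ‖a‖ := by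
      intro j
      have h3 := (coordL j).le_opNorm a
      have h4 : coordL j a = b.repr a j := by
        simp [hcoordL_def, Module.Basis.coord_apply]
      rw [h4, Real.norm_eq_abs] at h3
      exact h3
    have hKδ : K * δ ≤ η := by
      have h5 : K * δ ≤ (K + 1) * δ := by nlinarith
      have h6 : (K + 1) * δ = η := by
        rw [hδ_def]; field_simp
      linarith
    calc ‖D a‖ ≤ ∑ j, |b.repr a j| * ‖D (b j)‖ := h1
      _ ≤ ∑ j, (‖coordL j‖ * ‖a‖) * δ :=
          Finset.sum_le_sum fun j _ => mul_le_mul (h2 j) (hDb j)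
            (norm_nonneg _) (by positivity)
      _ = (K * δ) * ‖a‖ := by rw [← Finset.sum_mul, ← Finset.sum_mul]; ring
      _ ≤ η * ‖a‖ := mul_le_mul_of_nonneg_right hKδ (norm_nonneg a)
  -- define the embedding F
  set F : ↥A →ₗ[ℝ] lp (fun _ : ℕ => Y) 2 :=
    { toFun := fun a => ∑ i ∈ Finset.range n, lp.single 2 i (g a i)
      map_add' := fun a a' => by
        rw [← Finset.sum_add_distrib]
        exact Finset.sum_congr rfl fun i _ => by rw [hg_add, L2FR.single_add]
      map_smul' := fun t a => by
        simp only [RingHom.id_apply]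
        rw [Finset.smul_sum]
        exact Finset.sum_congr rfl fun i _ => by rw [hg_smul, lp.single_smul] } with hF_def
  have hFnorm : ∀ a : ↥A, ‖F a‖ ^ 2 = ∑ i ∈ Finset.range n, ‖g a i‖ ^ 2 :=
    fun a => L2FR.norm_sum_single_sq (g a) n
  have hPnorm : ∀ a : ↥A, ‖L2FR.truncLM n (a : lp (fun _ : ℕ => X) 2)‖ ^ 2 =
      ∑ i ∈ Finset.range n, ‖(a : lp (fun _ : ℕ => X) 2) i‖ ^ 2 :=
    fun a => L2FR.norm_truncLM_sq n _
  have hg1 : ∀ (a : ↥A) (i : ℕ), ‖g a i‖ ≤ ‖(a : lp (fun _ : ℕ => X) 2) i‖ :=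
    fun a i => hψ1 i _
  have hg2 : ∀ (a : ↥A) (i : ℕ), ‖(a : lp (fun _ : ℕ => X) 2) i‖ ≤ (1 + η) * ‖g a i‖ :=
    fun a i => hψ2 i ⟨(a : lp (fun _ : ℕ => X) 2) i, hmem a i⟩
  have hcoe : ∀ a : ↥A, ‖(a : lp (fun _ : ℕ => X) 2)‖ = ‖a‖ := fun a => rfl
  have key1 : ∀ a : ↥A, ‖F a‖ ≤ (1 + η) * ‖a‖ := by
    intro a
    have h1 : ‖F a‖ ^ 2 ≤ ‖L2FR.truncLM n (a : lp (fun _ : ℕ => X) 2)‖ ^ 2 := by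
      rw [hFnorm, hPnorm]
      exact Finset.sum_le_sum fun i _ => pow_le_pow_left₀ (norm_nonneg _) (hg1 a i) 2
    have h2 : ‖F a‖ ≤ ‖L2FR.truncLM n (a : lp (fun _ : ℕ => X) 2)‖ := by
      nlinarith [norm_nonneg (F a), norm_nonneg (L2FR.truncLM n (a : lp (fun _ : ℕ => X) 2))]
    have h3 : ‖L2FR.truncLM n (a : lp (fun _ : ℕ => X) 2)‖ ≤
        ‖(a : lp (fun _ : ℕ => X) 2)‖ + ‖L2FR.truncLM n (a : lp (fun _ : ℕ => X) 2) -
          (a : lp (fun _ : ℕ => X) 2)‖ := by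
      calc ‖L2FR.truncLM n (a : lp (fun _ : ℕ => X) 2)‖
          = ‖(a : lp (fun _ : ℕ => X) 2) + (L2FR.truncLM n (a : lp (fun _ : ℕ => X) 2) -
              (a : lp (fun _ : ℕ => X) 2))‖ := by congr 1; abel
        _ ≤ _ := norm_add_le _ _
    have h4 := hpert a
    rw [hcoe] at h3
    linarith
  have key2 : ∀ a : ↥A, (1 - η) * ‖a‖ ≤ (1 + η) * ‖F a‖ := by
    intro a
    have h1 : ‖L2FR.truncLM n (a : lp (fun _ : ℕ => X) 2)‖ ^ 2 ≤ ((1 + η) * ‖F a‖) ^ 2 := by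
      rw [hPnorm]
      calc ∑ i ∈ Finset.range n, ‖(a : lp (fun _ : ℕ => X) 2) i‖ ^ 2
          ≤ ∑ i ∈ Finset.range n, ((1 + η) * ‖g a i‖) ^ 2 :=
            Finset.sum_le_sum fun i _ => pow_le_pow_left₀ (norm_nonneg _) (hg2 a i) 2
        _ = (1 + η) ^ 2 * ∑ i ∈ Finset.range n, ‖g a i‖ ^ 2 := by
            rw [Finset.mul_sum]
            exact Finset.sum_congr rfl fun i _ => by ring
        _ = ((1 + η) * ‖F a‖) ^ 2 := by rw [mul_pow, hFnorm]
    have h2 : ‖L2FR.truncLM n (a : lp (fun _ : ℕ => X) 2)‖ ≤ (1 + η) * ‖F a‖ := by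
      nlinarith [norm_nonneg (L2FR.truncLM n (a : lp (fun _ : ℕ => X) 2)),
        mul_nonneg (by linarith : (0:ℝ) ≤ 1 + η) (norm_nonneg (F a))]
    have h3 : ‖(a : lp (fun _ : ℕ => X) 2)‖ ≤
        ‖L2FR.truncLM n (a : lp (fun _ : ℕ => X) 2)‖ + ‖L2FR.truncLM n (a : lp (fun _ : ℕ => X) 2) -
          (a : lp (fun _ : ℕ => X) 2)‖ := by
      calc ‖(a : lp (fun _ : ℕ => X) 2)‖
          = ‖L2FR.truncLM n (a : lp (fun _ : ℕ => X) 2) -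
              (L2FR.truncLM n (a : lp (fun _ : ℕ => X) 2) - (a : lp (fun _ : ℕ => X) 2))‖ := by
            congr 1; abel
        _ ≤ _ := norm_sub_le _ _
    have h4 := hpert a
    rw [hcoe] at h3
    linarith
  -- F is injective
  have hinj : Function.Injective F := by
    intro a a' hE
    have h1 := key2 (a - a')
    rw [map_sub, hE, sub_self, norm_zero, mul_zero] at h1
    have h2 : ‖a - a'‖ ≤ 0 := by nlinarith [norm_nonneg (a - a')]
    have h3 : a - a' = 0 := norm_le_zero_iff.mp h2
    exact sub_eq_zero.mp h3
  -- assemble the equivalence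
  set eqv : ↥A ≃ₗ[ℝ] ↥(LinearMap.range F) := LinearEquiv.ofInjective F hinj with heqv_def
  set u : ↥A ≃L[ℝ] ↥(LinearMap.range F) := eqv.toContinuousLinearEquiv with hu_def
  refine ⟨LinearMap.range F, u, ?_⟩
  have happ : ∀ a : ↥A, ‖(u : ↥A →L[ℝ] ↥(LinearMap.range F)) a‖ = ‖F a‖ := by
    intro a
    have h2 : ((u a : ↥(LinearMap.range F)) : lp (fun _ : ℕ => Y) 2) = F a := by
      simp only [hu_def, heqv_def]
      exact LinearEquiv.ofInjective_apply (h := hinj) F a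
    calc ‖(u : ↥A →L[ℝ] ↥(LinearMap.range F)) a‖
        = ‖((u a : ↥(LinearMap.range F)) : lp (fun _ : ℕ => Y) 2)‖ := rfl
      _ = ‖F a‖ := by rw [h2]
  have hu1 : ‖(u : ↥A →L[ℝ] ↥(LinearMap.range F))‖ ≤ 1 + η := by
    refine ContinuousLinearMap.opNorm_le_bound _ (by linarith) fun a => ?_
    rw [happ a]
    exact key1 a
  have hu2 : ‖(u.symm : ↥(LinearMap.range F) →L[ℝ] ↥A)‖ ≤ (1 + η) / (1 - η) := by
    refine ContinuousLinearMap.opNorm_le_bound _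
      (div_nonneg (by linarith) (by linarith)) fun yb => ?_
    have h2 : u (u.symm yb) = yb := u.apply_symm_apply yb
    have h3 := key2 (u.symm yb)
    have h4 : ‖F (u.symm yb)‖ = ‖yb‖ := by
      rw [← happ (u.symm yb)]
      rw [show (u : ↥A →L[ℝ] ↥(LinearMap.range F)) (u.symm yb) = u (u.symm yb) from rfl, h2]
    rw [h4] at h3
    have h5 : (u.symm : ↥(LinearMap.range F) →L[ℝ] ↥A) yb = u.symm yb := rfl
    rw [h5, div_mul_eq_mul_div, le_div_iff₀ (by linarith : (0:ℝ) < 1 - η)]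
    nlinarith [h3]
  calc ‖(u : ↥A →L[ℝ] ↥(LinearMap.range F))‖ *
        ‖(u.symm : ↥(LinearMap.range F) →L[ℝ] ↥A)‖
      ≤ (1 + η) * ((1 + η) / (1 - η)) :=
        mul_le_mul hu1 hu2 (ContinuousLinearMap.opNorm_nonneg _) (by linarith)
    _ ≤ 1 + ε := by
        rw [mul_div_assoc', div_le_iff₀ (by linarith : (0:ℝ) < 1 - η)]
        nlinarith [mul_le_mul_of_nonneg_left hη8 hη.le, mul_le_mul_of_nonneg_left hη8 hε.le]
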